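/- If a word w over [n] 12-represents a labeled graph G and i is a letter occurring more than twice in w, then the word obtained from w by removing all occurrences of i strictly between the first and last occurrence of i still 12-represents G. Consequently, every 12-representable labeled graph has a 12-representant in which each letter occurs at most twice. -/

import Mathlib

/-- Every occurrence of `j` precedes every occurrence of `i` in the word `w`. -/
def EveryBefore (w : List ℕ) (j i : ℕ) : Prop :=
  ∀ p q : Fin w.length, w.get p = j → w.get q = i → p < q

/-- The word `w` 12-represents the graph `G` on the vertex set `{1, …, n}`:
`w` uses only letters from `{1, …, n}`, contains each of them at least once, and
for `i < j` in `{1, …, n}`, `i` and `j` are adjacent iff every `j` occurs before every `i`. -/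
def Represents12 (n : ℕ) (G : SimpleGraph ℕ) (w : List ℕ) : Prop :=
  (∀ x ∈ w, 1 ≤ x ∧ x ≤ n) ∧
  (∀ i, 1 ≤ i → i ≤ n → i ∈ w) ∧
  (∀ i j, 1 ≤ i → i < j → j ≤ n → (G.Adj i j ↔ EveryBefore w j i))

/-- `w` is a permutation of `{1, …, n}`, i.e. each letter occurs exactly once. -/
def IsPermWord (n : ℕ) (w : List ℕ) : Prop :=
  w.Perm (List.range' 1 n)

/-- auxiliary split characterization -/
def EB (w : List ℕ) (j i : ℕ) : Prop := ∃ a b, w = a ++ b ∧ i ∉ a ∧ j ∉ b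

lemma first_split {i : ℕ} : ∀ {w : List ℕ}, i ∈ w → ∃ a b, w = a ++ i :: b ∧ i ∉ a
  | [], h => absurd h (by simp)
  | x :: t, h => by
    by_cases hx : x = i
    · exact ⟨[], t, by simp [hx], by simp⟩
    · have ht : i ∈ t := by
        rcases List.mem_cons.mp h with h1 | h1
        · exact absurd h1.symm hx
        · exact h1
      obtain ⟨a, b, rfl, ha⟩ := first_split ht
      exact ⟨x :: a, b, rfl, by simp [ha, Ne.symm hx]⟩

lemma eb_iff {w : List ℕ} {j i : ℕ} (hji : j ≠ i) :
    EveryBefore w j i ↔ EB w j i := by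
  constructor
  · intro h
    by_cases hi : i ∈ w
    · obtain ⟨a, b, rfl, hia⟩ := first_split hi
      refine ⟨a, i :: b, rfl, hia, ?_⟩
      intro hj
      rcases List.mem_cons.mp hj with h1 | hjb
      · exact hji h1
      · obtain ⟨q, hq⟩ := List.mem_iff_get.mp hjb
        have hlen : (a ++ i :: b).length = a.length + b.length + 1 := by
          simp [List.length_append]; omega
        have hq1 : a.length + 1 + q.val < (a ++ i :: b).length := by
          have := q.isLt; omega
        have hq2 : a.length < (a ++ i :: b).length := by omega
        have e1 : (a ++ i :: b).get ⟨a.length + 1 + q.val, hq1⟩ = j := by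
          rw [List.get_eq_getElem,
            List.getElem_append_right (by omega : a.length ≤ a.length + 1 + q.val)]
          have h2 : a.length + 1 + q.val - a.length = q.val + 1 := by omega
          simp only [h2, List.getElem_cons_succ]
          simpa using hq
        have e2 : (a ++ i :: b).get ⟨a.length, hq2⟩ = i := by
          rw [List.get_eq_getElem, List.getElem_append_right (le_refl a.length)]
          simp
        have := h _ _ e1 e2
        simp only [Fin.lt_def] at this
        omega
    · exact ⟨w, [], by simp, hi, by simp⟩
  · rintro ⟨a, b, rfl, hia, hjb⟩
    intro p q hp hq
    have hpa : p.val < a.length := by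
      by_contra hle
      push_neg at hle
      have hplt : p.val - a.length < b.length := by
        have := p.isLt; simp [List.length_append] at this; omega
      have : (a ++ b)[p.val] = b[p.val - a.length] := List.getElem_append_right hle
      apply hjb
      rw [← hp]
      simp only [List.get_eq_getElem, this]
      exact List.getElem_mem _
    have hqa : a.length ≤ q.val := by
      by_contra hlt
      push_neg at hlt
      have : (a ++ b)[q.val] = a[q.val] := List.getElem_append_left hlt
      apply hia
      rw [← hq]
      simp only [List.get_eq_getElem, this]
      exact List.getElem_mem _
    exact Fin.lt_def.mpr (by omega)

lemma filter_split {p : ℕ → Bool} : ∀ (v a' b' : List ℕ), v.filter p = a' ++ b' →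
    ∃ a b, v = a ++ b ∧ a.filter p = a' ∧ b.filter p = b'
  | [], a', b', h => by
    have h2 : a' = [] ∧ b' = [] := by
      have := h.symm; simpa [List.append_eq_nil_iff] using this
    exact ⟨[], [], rfl, by simp [h2.1], by simp [h2.2]⟩
  | x :: t, a', b', h => by
    by_cases hx : p x
    · rw [List.filter_cons_of_pos hx] at h
      cases a' with
      | nil =>
        refine ⟨[], x :: t, rfl, rfl, ?_⟩
        rw [List.filter_cons_of_pos hx]
        simpa using h
      | cons y a'' =>
        simp only [List.cons_append, List.cons.injEq] at h
        obtain ⟨rfl, h2⟩ := h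
        obtain ⟨a, b, rfl, h3, h4⟩ := filter_split t a'' b' h2
        exact ⟨x :: a, b, rfl, by simp [List.filter_cons_of_pos hx, h3], h4⟩
    · rw [List.filter_cons_of_neg hx] at h
      obtain ⟨a, b, rfl, h3, h4⟩ := filter_split t a' b' h
      exact ⟨x :: a, b, rfl, by simp [List.filter_cons_of_neg hx, h3], h4⟩

lemma eb_filter {w : List ℕ} {j i c : ℕ} (hci : c ≠ i) (hcj : c ≠ j) :
    EB w j i ↔ EB (w.filter (· ≠ c)) j i := by
  constructor
  · rintro ⟨a, b, rfl, hia, hjb⟩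
    refine ⟨a.filter (· ≠ c), b.filter (· ≠ c), by simp [List.filter_append], ?_, ?_⟩
    · intro h; exact hia (List.mem_of_mem_filter h)
    · intro h; exact hjb (List.mem_of_mem_filter h)
  · rintro ⟨a', b', hsplit, hia, hjb⟩
    obtain ⟨a, b, rfl, h3, h4⟩ := filter_split (p := (· ≠ c)) _ a' b' hsplit
    refine ⟨a, b, rfl, ?_, ?_⟩
    · intro h
      apply hia
      rw [← h3]
      simp [List.mem_filter, h, Ne.symm hci]
    · intro h
      apply hjb
      rw [← h4]
      simp [List.mem_filter, h, Ne.symm hcj]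

lemma cons_eq_append {i : ℕ} {rest c b : List ℕ} (h : c ++ b = i :: rest) :
    (c = [] ∧ b = i :: rest) ∨ ∃ c', c = i :: c' ∧ c' ++ b = rest := by
  cases c with
  | nil => exact Or.inl ⟨rfl, by simpa using h⟩
  | cons y c' =>
    simp only [List.cons_append, List.cons.injEq] at h
    exact Or.inr ⟨c', by simp [h.1], h.2⟩

-- case i' = i : EB w j i with w = w₁ ++ i::w₂ ++ i::w₃
lemma eb_case_i {w₁ w₂ w₃ : List ℕ} {i j : ℕ} (h1 : i ∉ w₁) (hji : j ≠ i) :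
    EB (w₁ ++ i :: w₂ ++ i :: w₃) j i ↔ j ∉ w₂ ∧ j ∉ w₃ := by
  constructor
  · rintro ⟨a, b, hsplit, hia, hjb⟩
    have hsplit' : a ++ b = w₁ ++ (i :: w₂ ++ i :: w₃) := by
      rw [← hsplit]; simp
    rcases List.append_eq_append_iff.mp hsplit' with ⟨a', ha, hb⟩ | ⟨c', ha, hb⟩
    · subst hb
      constructor
      · intro h; exact hjb (by simp [h])
      · intro h; exact hjb (by simp [h])
    · rcases cons_eq_append hb.symm with ⟨rfl, hb2⟩ | ⟨c'', rfl, hb2⟩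
      · subst hb2
        constructor
        · intro h; exact hjb (by simp [h])
        · intro h; exact hjb (by simp [h])
      · exfalso; exact hia (by simp [ha])
  · rintro ⟨h2, h3⟩
    exact ⟨w₁, i :: w₂ ++ i :: w₃, by simp, h1, by simp [h2, h3, hji]⟩

-- case j = i : EB w i i' with w = w₁ ++ i::w₂ ++ i::w₃
lemma eb_case_j {w₁ w₂ w₃ : List ℕ} {i i' : ℕ} (h3 : i ∉ w₃) (hii : i' ≠ i) :
    EB (w₁ ++ i :: w₂ ++ i :: w₃) i i' ↔ i' ∉ w₁ ∧ i' ∉ w₂ := by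
  constructor
  · rintro ⟨a, b, hsplit, hia, hjb⟩
    have hsplit' : a ++ b = w₁ ++ (i :: w₂ ++ i :: w₃) := by
      rw [← hsplit]; simp
    rcases List.append_eq_append_iff.mp hsplit' with ⟨a', ha, hb⟩ | ⟨c', ha, hb⟩
    · exfalso; exact hjb (by simp [hb])
    · have hiw1 : i' ∉ w₁ := fun h => hia (by simp [ha, h])
      have hic' : i' ∉ c' := fun h => hia (by simp [ha, h])
      rcases cons_eq_append hb.symm with ⟨rfl, hb2⟩ | ⟨c'', hc, hb2⟩
      · exfalso; exact hjb (by simp [hb2])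
      · have hb3 : c'' ++ b = w₂ ++ (i :: w₃) := by simpa using hb2
        rcases List.append_eq_append_iff.mp hb3 with ⟨a2, ha2, hb4⟩ | ⟨c2, ha2, hb4⟩
        · exfalso; exact hjb (by simp [hb4])
        · refine ⟨hiw1, fun h => hic' ?_⟩
          rw [hc, ha2]
          simp [h]
  · rintro ⟨h1, h2⟩
    refine ⟨w₁ ++ i :: w₂ ++ [i], w₃, by simp, ?_, h3⟩
    simp [h1, h2, hii]

lemma mem_filter_ne {w : List ℕ} {x i : ℕ} (hx : x ≠ i) :
    x ∈ w.filter (· ≠ i) ↔ x ∈ w := by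
  simp [List.mem_filter, hx]

lemma eb_transfer {w₁ w₂ w₃ : List ℕ} {i i' j : ℕ} (h1 : i ∉ w₁) (h3 : i ∉ w₃)
    (hji : j ≠ i') :
    EB (w₁ ++ i :: w₂ ++ i :: w₃) j i' ↔
    EB (w₁ ++ i :: (w₂.filter (· ≠ i)) ++ i :: w₃) j i' := by
  by_cases hii : i' = i
  · subst hii
    rw [eb_case_i h1 hji, eb_case_i h1 hji, mem_filter_ne hji]
  · by_cases hj : j = i
    · subst hj
      rw [eb_case_j h3 hii, eb_case_j h3 hii]
      rw [mem_filter_ne hii]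
    · have e1 := eb_filter (w := w₁ ++ i :: w₂ ++ i :: w₃) (j := j) (i := i') (c := i)
        (Ne.symm hii) (Ne.symm hj)
      have e2 := eb_filter (w := w₁ ++ i :: (w₂.filter (· ≠ i)) ++ i :: w₃) (j := j) (i := i')
        (c := i) (Ne.symm hii) (Ne.symm hj)
      have heq : (w₁ ++ i :: w₂ ++ i :: w₃).filter (· ≠ i) =
          (w₁ ++ i :: (w₂.filter (· ≠ i)) ++ i :: w₃).filter (· ≠ i) := by
        simp [List.filter_append, List.filter_filter]
      exact e1.trans (by rw [heq]; exact e2.symm)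

lemma part1 {n : ℕ} {G : SimpleGraph ℕ} {w₁ w₂ w₃ : List ℕ} {i : ℕ}
    (hG : Represents12 n G (w₁ ++ i :: w₂ ++ i :: w₃))
    (h1 : i ∉ w₁) (h3 : i ∉ w₃) :
    Represents12 n G (w₁ ++ i :: (w₂.filter (· ≠ i)) ++ i :: w₃) := by
  obtain ⟨hA, hB, hC⟩ := hG
  refine ⟨?_, ?_, ?_⟩
  · intro x hx
    apply hA
    simp only [List.mem_append, List.mem_cons] at hx ⊢
    rcases hx with (hx | hx | hx) | hx | hx
    · exact Or.inl (Or.inl hx)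
    · exact Or.inl (Or.inr (Or.inl hx))
    · exact Or.inl (Or.inr (Or.inr (List.mem_of_mem_filter hx)))
    · exact Or.inr (Or.inl hx)
    · exact Or.inr (Or.inr hx)
  · intro k hk1 hk2
    have := hB k hk1 hk2
    simp only [List.mem_append, List.mem_cons] at this ⊢
    by_cases hki : k = i
    · exact Or.inl (Or.inr (Or.inl hki))
    · rcases this with (hx | hx | hx) | hx | hx
      · exact Or.inl (Or.inl hx)
      · exact Or.inl (Or.inr (Or.inl hx))
      · exact Or.inl (Or.inr (Or.inr ((mem_filter_ne hki).mpr hx)))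
      · exact Or.inr (Or.inl hx)
      · exact Or.inr (Or.inr hx)
  · intro a b ha hab hb
    have hne : b ≠ a := Nat.ne_of_gt hab
    rw [hC a b ha hab hb, eb_iff hne, eb_iff hne, eb_transfer h1 h3 hne]

lemma two_occ_split {w : List ℕ} {i : ℕ} (h : 2 ≤ w.count i) :
    ∃ w₁ w₂ w₃, w = w₁ ++ i :: w₂ ++ i :: w₃ ∧ i ∉ w₁ ∧ i ∉ w₃ := by
  have hi : i ∈ w := List.count_pos_iff.mp (by omega)
  obtain ⟨w₁, t, rfl, h1⟩ := first_split hi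
  have hct : 1 ≤ t.count i := by
    have hw1 : w₁.count i = 0 := List.count_eq_zero_of_not_mem h1
    have he : (w₁ ++ i :: t).count i = 1 + t.count i := by
      simp [List.count_append, List.count_cons, hw1]
      omega
    rw [he] at h
    omega
  have hit : i ∈ t := List.count_pos_iff.mp (by omega)
  have hitr : i ∈ t.reverse := by simpa using hit
  obtain ⟨u, v, huv, hu⟩ := first_split hitr
  refine ⟨w₁, v.reverse, u.reverse, ?_, h1, by simpa using hu⟩
  have : t = v.reverse ++ i :: u.reverse := by
    have := congrArg List.reverse huv
    simpa using this
  rw [this]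
  simp

lemma part2 {n : ℕ} {G : SimpleGraph ℕ} :
    ∀ N (w : List ℕ), w.length ≤ N → Represents12 n G w →
      ∃ w', Represents12 n G w' ∧ ∀ x, w'.count x ≤ 2 := by
  intro N
  induction N with
  | zero =>
    intro w hw hG
    exact ⟨w, hG, fun x => by
      have : w.count x ≤ w.length := List.count_le_length
      omega⟩
  | succ N ih =>
    intro w hw hG
    by_cases hall : ∀ x, w.count x ≤ 2
    · exact ⟨w, hG, hall⟩
    · push_neg at hall
      obtain ⟨i, hi⟩ := hall
      obtain ⟨w₁, w₂, w₃, rfl, h1, h3⟩ := two_occ_split (w := w) (i := i) (by omega)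
      have hiw2 : i ∈ w₂ := by
        have hc : (w₁ ++ i :: w₂ ++ i :: w₃).count i
            = w₂.count i + 2 := by
          simp [List.count_append, List.count_cons, h1, h3,
            List.count_eq_zero_of_not_mem h1, List.count_eq_zero_of_not_mem h3]
        rw [hc] at hi
        exact List.count_pos_iff.mp (by omega)
      set u := w₂.filter (· ≠ i) with hu
      have hlt : u.length < w₂.length := by
        rw [hu, List.length_filter_lt_length_iff_exists]
        exact ⟨i, hiw2, by simp⟩
      have hlen : (w₁ ++ i :: u ++ i :: w₃).length ≤ N := by
        have hlenw : (w₁ ++ i :: w₂ ++ i :: w₃).length ≤ N + 1 := hw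
        simp only [List.length_append, List.length_cons] at hlenw ⊢
        omega
      exact ih _ hlen (part1 hG h1 h3)

theorem stmt_0 :
    (∀ (n : ℕ) (G : SimpleGraph ℕ) (w₁ w₂ w₃ : List ℕ) (i : ℕ),
      Represents12 n G (w₁ ++ i :: w₂ ++ i :: w₃) →
      i ∉ w₁ → i ∉ w₃ →
      2 < (w₁ ++ i :: w₂ ++ i :: w₃).count i →
      Represents12 n G (w₁ ++ i :: (w₂.filter (· ≠ i)) ++ i :: w₃)) ∧
    (∀ (n : ℕ) (G : SimpleGraph ℕ),
      (∃ w, Represents12 n G w) →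
      ∃ w, Represents12 n G w ∧ ∀ x, w.count x ≤ 2) := by
  constructor
  · intro n G w₁ w₂ w₃ i hG h1 h3 _
    exact part1 hG h1 h3
  · rintro n G ⟨w, hw⟩
    exact part2 w.length w le_rfl hw
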